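/- arXiv:0902.0419 — 2 statements merged into one kernel-verified Lean document; each statement's English description precedes it below -/
import Mathlib

section
/- Let r ≥ 2 be a natural number and define G : ℂ → ℂ by G(s) = (Λ(2s)/Λ(2s+r-1)) · (Λ(s+(r-1)/2)/Λ(s+(3r+1)/2)) · (Λ(s-(r+1)/2)/Λ(s+(r+1)/2)), where Λ is the completed Riemann zeta function. Then the function s ↦ (s - (r+1)/2) · G(s) tends to -Λ(r)/(Λ(2r)·Λ(2r+1)) as s tends to (r+1)/2 within ℂ \ {(r+1)/2}; that is, G has a simple pole at s = (r+1)/2 with residue -Λ(r)/(Λ(2r)·Λ(2r+1)). -/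
open Complex Filter Topology

lemma completedZeta_ne_zero {s : ℂ} (hs : 1 < s.re) : completedRiemannZeta s ≠ 0 := by
  have h0 : s ≠ 0 := by rintro rfl; norm_num at hs
  intro h
  have h2 : riemannZeta s = 0 := by rw [riemannZeta_def_of_ne_zero h0, h, zero_div]
  exact riemannZeta_ne_zero_of_one_lt_re hs h2

lemma completedZeta_diffAt {s : ℂ} (hs : 1 < s.re) :
    DifferentiableAt ℂ completedRiemannZeta s := by
  refine differentiableAt_completedZeta ?_ ?_
  · rintro rfl; norm_num at hs
  · rintro rfl; norm_num at hs

lemma completedZeta_residue_zero :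
    Tendsto (fun z : ℂ => z * completedRiemannZeta z) (𝓝[≠] 0) (𝓝 (-1)) := by
  have hc : ContinuousAt (fun z : ℂ => z * completedRiemannZeta₀ z - 1 - z / (1 - z)) 0 := by
    refine ((continuousAt_id.mul
      differentiable_completedZeta₀.continuous.continuousAt).sub continuousAt_const).sub ?_
    exact continuousAt_id.div (continuousAt_const.sub continuousAt_id) (by simp)
  have h : Tendsto (fun z : ℂ => z * completedRiemannZeta₀ z - 1 - z / (1 - z)) (𝓝 0)
      (𝓝 (-1)) := by simpa using hc.tendsto
  refine (h.mono_left nhdsWithin_le_nhds).congr' ?_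
  filter_upwards [self_mem_nhdsWithin] with z hz
  have hz' : z ≠ 0 := hz
  rw [completedRiemannZeta_eq, mul_sub, mul_sub, mul_one_div, mul_one_div, div_self hz']

/-- The factor `G^{(2r+1,r)}(s)` from the constant-term formula (Proposition 4.1),
`G(s) = Λ(2s)/Λ(2s+r-1) · Λ(s+(r-1)/2)/Λ(s+(3r+1)/2) · Λ(s-(r+1)/2)/Λ(s+(r+1)/2)`,
has a simple pole at `s = (r+1)/2` with residue `-Λ(r)/(Λ(2r)·Λ(2r+1))`. -/
theorem G_simple_pole (r : ℕ) (hr : 2 ≤ r) (G : ℂ → ℂ)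
    (hG : ∀ s : ℂ, G s =
      (completedRiemannZeta (2 * s) / completedRiemannZeta (2 * s + (r : ℂ) - 1)) *
      (completedRiemannZeta (s + ((r : ℂ) - 1) / 2) /
        completedRiemannZeta (s + (3 * (r : ℂ) + 1) / 2)) *
      (completedRiemannZeta (s - ((r : ℂ) + 1) / 2) /
        completedRiemannZeta (s + ((r : ℂ) + 1) / 2))) :
    Tendsto (fun s : ℂ => (s - ((r : ℂ) + 1) / 2) * G s)
      (nhdsWithin (((r : ℂ) + 1) / 2) {(((r : ℂ) + 1) / 2 : ℂ)}ᶜ)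
      (nhds (-completedRiemannZeta (r : ℂ) /
        (completedRiemannZeta (2 * (r : ℂ)) * completedRiemannZeta (2 * (r : ℂ) + 1)))) := by
  have hr' : (2 : ℝ) ≤ (r : ℝ) := by exact_mod_cast hr
  set c : ℂ := ((r : ℂ) + 1) / 2 with hc
  -- argument values at c
  have e1 : 2 * c = (r : ℂ) + 1 := by rw [hc]; ring
  have e2 : 2 * c + (r : ℂ) - 1 = 2 * (r : ℂ) := by rw [hc]; ring
  have e3 : c + ((r : ℂ) - 1) / 2 = (r : ℂ) := by rw [hc]; ring
  have e4 : c + (3 * (r : ℂ) + 1) / 2 = 2 * (r : ℂ) + 1 := by rw [hc]; ring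
  have e5 : c + ((r : ℂ) + 1) / 2 = (r : ℂ) + 1 := by rw [hc]; ring
  -- real parts
  have re1 : (1 : ℝ) < ((r : ℂ) + 1).re := by simp; linarith
  have re2 : (1 : ℝ) < (2 * (r : ℂ)).re := by simp; linarith
  have re3 : (1 : ℝ) < ((r : ℂ)).re := by simp; linarith
  have re4 : (1 : ℝ) < (2 * (r : ℂ) + 1).re := by simp; linarith
  have n1 := completedZeta_ne_zero re1
  have n2 := completedZeta_ne_zero re2
  have n3 := completedZeta_ne_zero re3
  have n4 := completedZeta_ne_zero re4
  -- the regular factor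
  set f : ℂ → ℂ := fun s =>
    completedRiemannZeta (2 * s) / completedRiemannZeta (2 * s + (r : ℂ) - 1) *
      (completedRiemannZeta (s + ((r : ℂ) - 1) / 2) /
        completedRiemannZeta (s + (3 * (r : ℂ) + 1) / 2)) *
      (completedRiemannZeta (s + ((r : ℂ) + 1) / 2))⁻¹ with hf
  have hfc : ContinuousAt f c := by
    have d1 : ContinuousAt (fun s : ℂ => completedRiemannZeta (2 * s)) c := by
      refine ((completedZeta_diffAt ?_).continuousAt.comp (by fun_prop))
      rwa [e1]
    have d2 : ContinuousAt (fun s : ℂ => completedRiemannZeta (2 * s + (r : ℂ) - 1)) c := by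
      refine ((completedZeta_diffAt ?_).continuousAt.comp (by fun_prop))
      rwa [e2]
    have d3 : ContinuousAt (fun s : ℂ => completedRiemannZeta (s + ((r : ℂ) - 1) / 2)) c := by
      refine ((completedZeta_diffAt ?_).continuousAt.comp (by fun_prop))
      rwa [e3]
    have d4 : ContinuousAt (fun s : ℂ => completedRiemannZeta (s + (3 * (r : ℂ) + 1) / 2)) c := by
      refine ((completedZeta_diffAt ?_).continuousAt.comp (by fun_prop))
      rwa [e4]
    have d5 : ContinuousAt (fun s : ℂ => completedRiemannZeta (s + ((r : ℂ) + 1) / 2)) c := by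
      refine ((completedZeta_diffAt ?_).continuousAt.comp (by fun_prop))
      rwa [e5]
    refine ((d1.div d2 ?_).mul (d3.div d4 ?_)).mul (d5.inv₀ ?_)
    · rwa [e2]
    · rwa [e4]
    · rwa [e5]
  -- the singular factor
  have hsub : Tendsto (fun s : ℂ => s - c) (𝓝[≠] c) (𝓝[≠] (0 : ℂ)) := by
    apply tendsto_nhdsWithin_of_tendsto_nhds_of_eventually_within
    · exact ((continuous_id.sub continuous_const).tendsto' c 0 (by simp [hc])).mono_left
        nhdsWithin_le_nhds
    · filter_upwards [self_mem_nhdsWithin] with s hs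
      simpa [sub_eq_zero] using hs
  have hg : Tendsto (fun s : ℂ => (s - c) * completedRiemannZeta (s - c)) (𝓝[≠] c)
      (𝓝 (-1)) := completedZeta_residue_zero.comp hsub
  have key : Tendsto (fun s : ℂ => f s * ((s - c) * completedRiemannZeta (s - c))) (𝓝[≠] c)
      (𝓝 (f c * (-1))) :=
    (hfc.continuousWithinAt.tendsto).mul hg
  have hval : f c * (-1) = -completedRiemannZeta (r : ℂ) /
      (completedRiemannZeta (2 * (r : ℂ)) * completedRiemannZeta (2 * (r : ℂ) + 1)) := by
    rw [hf]
    simp only [e1, e2, e3, e4, e5]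
    rw [div_mul_div_comm, div_mul_eq_mul_div,
      mul_comm (completedRiemannZeta ((r : ℂ) + 1)) (completedRiemannZeta (r : ℂ)),
      mul_assoc, mul_inv_cancel₀ n1, mul_one, mul_neg_one, neg_div]
    norm_num
    rw [show (r : ℂ) + 1 + (r : ℂ) - 1 = 2 * (r : ℂ) from by ring]
  rw [← hval]
  refine key.congr fun s => ?_
  rw [hG s]
  ring
end

section
/- Let m ≥ 2 be a natural number and let s ∈ ℂ satisfy Re(s) > m/2. Then (∏_{i=0}^{m-2} Λ(2s - i)/Λ(2s + m - 1 - 2i)) · (∏_{i=0}^{m-2} Λ(-2s - i)/Λ(-2s + m - 1 - 2i)) = 1, where Λ is the completed Riemann zeta function; i.e., the function β_m(s) = ∏_{i=0}^{m-2} Λ(2s-i)/Λ(2s+m-1-2i) satisfies β_m(s)·β_m(-s) = 1 for Re(s) > m/2. -/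
open Complex

lemma completedRiemannZeta_ne_zero_of_one_lt_re' {z : ℂ} (hz : 1 < z.re) :
    completedRiemannZeta z ≠ 0 := by
  have h0 : z ≠ 0 := by
    intro h; rw [h] at hz; simp at hz; linarith
  have hdef := riemannZeta_def_of_ne_zero h0
  have hζ : riemannZeta z ≠ 0 := riemannZeta_ne_zero_of_one_lt_re hz
  intro h
  rw [h, zero_div] at hdef
  exact hζ hdef

lemma prod_even_mul_odd (g : ℕ → ℂ) (n : ℕ) :
    (∏ i ∈ Finset.range n, g (2 * i)) * ∏ i ∈ Finset.range n, g (2 * i + 1)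
      = ∏ j ∈ Finset.range (2 * n), g j := by
  induction n with
  | zero => simp
  | succ k ih =>
      rw [Finset.prod_range_succ, Finset.prod_range_succ, Nat.mul_succ,
        Finset.prod_range_succ, Finset.prod_range_succ, ← ih]
      ring

lemma key_prod (n : ℕ) (G : ℕ → ℂ) (hG : ∀ k, G k ≠ 0) :
    (∏ k ∈ Finset.range n, G k / G (2 * k + 1)) *
      ∏ k ∈ Finset.range n, G (n + k) / G (2 * k) = 1 := by
  rw [Finset.prod_div_distrib, Finset.prod_div_distrib, div_mul_div_comm,
    ← Finset.prod_range_add, ← two_mul]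
  rw [mul_comm (∏ k ∈ Finset.range n, G (2 * k + 1)), prod_even_mul_odd]
  exact div_self (Finset.prod_ne_zero_iff.mpr fun k _ => hG k)

/-- Spherical instance of `M_m(-s) ∘ M_m(s) = 1`: the factor
`β_m(s) = ∏_{i=0}^{m-2} Λ(2s-i)/Λ(2s+m-1-2i)` satisfies `β_m(s)·β_m(-s) = 1`
for `Re(s) > m/2`. -/
theorem beta_mul_beta_neg (m : ℕ) (hm : 2 ≤ m) (s : ℂ) (hs : (m : ℝ) / 2 < s.re) :
    (∏ i ∈ Finset.range (m - 1),
      completedRiemannZeta (2 * s - (i : ℂ)) /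
        completedRiemannZeta (2 * s + (m : ℂ) - 1 - 2 * (i : ℂ))) *
    (∏ i ∈ Finset.range (m - 1),
      completedRiemannZeta (2 * (-s) - (i : ℂ)) /
        completedRiemannZeta (2 * (-s) + (m : ℂ) - 1 - 2 * (i : ℂ))) = 1 := by
  obtain ⟨n, rfl⟩ : ∃ n, m = n + 1 := ⟨m - 1, by omega⟩
  have hn : 1 ≤ n := by omega
  have hsn : (n : ℝ) + 1 < 2 * s.re := by
    push_cast at hs; linarith
  set G : ℕ → ℂ := fun k => completedRiemannZeta (2 * s + k + 1 - n) with hGdef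
  have hG : ∀ k, G k ≠ 0 := by
    intro k
    apply completedRiemannZeta_ne_zero_of_one_lt_re'
    have hk : (0 : ℝ) ≤ k := Nat.cast_nonneg k
    have hre : (2 * s + (k : ℂ) + 1 - (n : ℂ)).re = 2 * s.re + k + 1 - n := by
      simp
    rw [hre]
    nlinarith [hsn, hk]
  have hrange : n + 1 - 1 = n := by omega
  rw [hrange]
  have h1 : (∏ i ∈ Finset.range n,
      completedRiemannZeta (2 * s - (i : ℂ)) /
        completedRiemannZeta (2 * s + ((n : ℂ) + 1) - 1 - 2 * (i : ℂ)))
      = ∏ k ∈ Finset.range n, G k / G (2 * k + 1) := by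
    rw [← Finset.prod_range_reflect (fun k => G k / G (2 * k + 1)) n]
    refine Finset.prod_congr rfl fun i hi => ?_
    have hi' : i < n := Finset.mem_range.mp hi
    have e : ((n - 1 - i : ℕ) : ℂ) = (n : ℂ) - 1 - (i : ℂ) := by
      have : (n - 1 - i : ℕ) + 1 + i = n := by omega
      have := congrArg (Nat.cast : ℕ → ℂ) this
      push_cast at this
      linear_combination this
    simp only [G]
    have eN : 2 * s - (i : ℂ) = 2 * s + ((n - 1 - i : ℕ) : ℂ) + 1 - n := by
      rw [e]; ring
    have eD : 2 * s + ((n : ℂ) + 1) - 1 - 2 * (i : ℂ)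
        = 2 * s + ((2 * (n - 1 - i) + 1 : ℕ) : ℂ) + 1 - n := by
      push_cast [e]; ring
    rw [eN, eD]
  have h2 : (∏ i ∈ Finset.range n,
      completedRiemannZeta (2 * (-s) - (i : ℂ)) /
        completedRiemannZeta (2 * (-s) + ((n : ℂ) + 1) - 1 - 2 * (i : ℂ)))
      = ∏ k ∈ Finset.range n, G (n + k) / G (2 * k) := by
    refine Finset.prod_congr rfl fun i _ => ?_
    simp only [G]
    have e1 : 2 * (-s) - (i : ℂ) = 1 - (2 * s + ((n + i : ℕ) : ℂ) + 1 - n) := by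
      push_cast; ring
    have e2 : 2 * (-s) + ((n : ℂ) + 1) - 1 - 2 * (i : ℂ)
        = 1 - (2 * s + ((2 * i : ℕ) : ℂ) + 1 - n) := by
      push_cast; ring
    rw [e1, e2, completedRiemannZeta_one_sub, completedRiemannZeta_one_sub]
  push_cast
  push_cast at h1 h2
  rw [h1, h2]
  exact key_prod n G hG
end
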